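/- Let z_1, …, z_p be real and nonzero with distinct nonzero products: consider a 2m×p real matrix B partitioned into blocks B₁, B₂ ∈ ℝ^{m×p}, and for K ≥ 0 define T_K by multiplying the j-th column of B₁ by z_j^K and leaving B₂ unchanged. If T_0 and T_1 both have full column rank p ≤ 2m, then there exists K_0 such that T_K has full column rank for all K > K_0. -/

import Mathlib

open Finset Matrix

/-- A function is a finite exponential sum with nonzero real bases. -/
def IsExpSum (f : ℕ → ℝ) : Prop :=
  ∃ (s : Finset ℝ) (c : ℝ → ℝ), (∀ r ∈ s, r ≠ 0) ∧ ∀ K, f K = ∑ r ∈ s, c r * r ^ K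

lemma isExpSum_const (a : ℝ) : IsExpSum (fun _ => a) :=
  ⟨{1}, fun _ => a, by simp, by simp⟩

lemma isExpSum_const_mul_pow (a w : ℝ) (hw : w ≠ 0) :
    IsExpSum (fun K => a * w ^ K) :=
  ⟨{w}, fun _ => a, by simpa using hw, by simp⟩

lemma IsExpSum.add {f g : ℕ → ℝ} (hf : IsExpSum f) (hg : IsExpSum g) :
    IsExpSum (fun K => f K + g K) := by
  obtain ⟨s₁, c₁, hr₁, he₁⟩ := hf
  obtain ⟨s₂, c₂, hr₂, he₂⟩ := hg
  refine ⟨s₁ ∪ s₂,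
    fun r => (if r ∈ s₁ then c₁ r else 0) + (if r ∈ s₂ then c₂ r else 0), ?_, ?_⟩
  · intro r hr
    rcases Finset.mem_union.1 hr with h | h
    exacts [hr₁ r h, hr₂ r h]
  · intro K
    have h1 : ∑ r ∈ s₁ ∪ s₂, (if r ∈ s₁ then c₁ r else 0) * r ^ K
        = ∑ r ∈ s₁, c₁ r * r ^ K := by
      rw [← Finset.sum_subset (Finset.subset_union_left (s₂ := s₂))]
      · exact Finset.sum_congr rfl fun r hr => by rw [if_pos hr]
      · intro r _ hr; rw [if_neg hr, zero_mul]
    have h2 : ∑ r ∈ s₁ ∪ s₂, (if r ∈ s₂ then c₂ r else 0) * r ^ K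
        = ∑ r ∈ s₂, c₂ r * r ^ K := by
      rw [← Finset.sum_subset (Finset.subset_union_right (s₁ := s₁))]
      · exact Finset.sum_congr rfl fun r hr => by rw [if_pos hr]
      · intro r _ hr; rw [if_neg hr, zero_mul]
    simp only [add_mul, Finset.sum_add_distrib, h1, h2, he₁, he₂]

lemma IsExpSum.mul {f g : ℕ → ℝ} (hf : IsExpSum f) (hg : IsExpSum g) :
    IsExpSum (fun K => f K * g K) := by
  classical
  obtain ⟨s₁, c₁, hr₁, he₁⟩ := hf
  obtain ⟨s₂, c₂, hr₂, he₂⟩ := hg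
  refine ⟨(s₁ ×ˢ s₂).image (fun q => q.1 * q.2),
    fun u => ∑ q ∈ (s₁ ×ˢ s₂).filter (fun q => q.1 * q.2 = u), c₁ q.1 * c₂ q.2, ?_, ?_⟩
  · intro r hr
    obtain ⟨q, hq, rfl⟩ := Finset.mem_image.1 hr
    obtain ⟨hq1, hq2⟩ := Finset.mem_product.1 hq
    exact mul_ne_zero (hr₁ _ hq1) (hr₂ _ hq2)
  · intro K
    have key : ∀ u ∈ (s₁ ×ˢ s₂).image (fun q => q.1 * q.2),
        (∑ q ∈ (s₁ ×ˢ s₂).filter (fun q => q.1 * q.2 = u), c₁ q.1 * c₂ q.2) * u ^ K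
        = ∑ q ∈ (s₁ ×ˢ s₂).filter (fun q => q.1 * q.2 = u),
            (c₁ q.1 * q.1 ^ K) * (c₂ q.2 * q.2 ^ K) := by
      intro u _
      rw [Finset.sum_mul]
      refine Finset.sum_congr rfl fun q hq => ?_
      have : q.1 * q.2 = u := (Finset.mem_filter.1 hq).2
      rw [← this, mul_pow]; ring
    show f K * g K = _
    rw [he₁, he₂, Finset.sum_mul_sum, Finset.sum_congr rfl key,
      Finset.sum_fiberwise_of_maps_to (fun q hq => Finset.mem_image_of_mem _ hq)]
    rw [Finset.sum_product]

lemma isExpSum_sum {ι : Type*} (t : Finset ι) (f : ι → ℕ → ℝ)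
    (h : ∀ i ∈ t, IsExpSum (f i)) : IsExpSum (fun K => ∑ i ∈ t, f i K) := by
  classical
  induction t using Finset.induction_on with
  | empty => simpa using isExpSum_const 0
  | insert a s hx ih =>
    simp only [Finset.sum_insert hx]
    exact (h a (Finset.mem_insert_self a s)).add
      (ih fun i hi => h i (Finset.mem_insert_of_mem hi))

lemma isExpSum_prod {ι : Type*} (t : Finset ι) (f : ι → ℕ → ℝ)
    (h : ∀ i ∈ t, IsExpSum (f i)) : IsExpSum (fun K => ∏ i ∈ t, f i K) := by
  classical
  induction t using Finset.induction_on with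
  | empty => simpa using isExpSum_const 1
  | insert a s hx ih =>
    simp only [Finset.prod_insert hx]
    exact (h a (Finset.mem_insert_self a s)).mul
      (ih fun i hi => h i (Finset.mem_insert_of_mem hi))

/-- A positive-base exponential sum whose value at `0` is nonzero is eventually nonzero. -/
lemma posExp_eventually (s : Finset ℝ) (d : ℝ → ℝ) (hpos : ∀ t ∈ s, 0 < t)
    (h0 : (∑ t ∈ s, d t) ≠ 0) :
    ∃ N : ℕ, ∀ n ≥ N, (∑ t ∈ s, d t * t ^ n) ≠ 0 := by
  classical
  set T : Finset ℝ := s.filter (fun t => d t ≠ 0) with hT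
  have hsum0 : ∀ n : ℕ, (∑ t ∈ s, d t * t ^ n) = ∑ t ∈ T, d t * t ^ n := by
    intro n
    rw [hT, Finset.sum_filter]
    refine Finset.sum_congr rfl fun t _ => ?_
    by_cases h : d t = 0 <;> simp [h]
  have hTne : T.Nonempty := by
    by_contra h
    rw [Finset.not_nonempty_iff_eq_empty] at h
    have := hsum0 0
    simp only [pow_zero, mul_one] at this
    rw [h, Finset.sum_empty] at this
    exact h0 this
  set t₀ : ℝ := T.max' hTne with ht₀
  have ht₀T : t₀ ∈ T := T.max'_mem hTne
  have ht₀s : t₀ ∈ s := (Finset.mem_filter.1 ht₀T).1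
  have hd₀ : d t₀ ≠ 0 := (Finset.mem_filter.1 ht₀T).2
  have ht₀pos : 0 < t₀ := hpos _ ht₀s
  -- the normalized sum tends to d t₀
  have hlim : Filter.Tendsto (fun n => ∑ t ∈ T, d t * (t / t₀) ^ n)
      Filter.atTop (nhds (d t₀)) := by
    have : d t₀ = ∑ t ∈ T, (if t = t₀ then d t₀ else 0) := by
      rw [Finset.sum_ite_eq' T t₀ (fun _ => d t₀)]
      simp [ht₀T]
    rw [this]
    refine tendsto_finset_sum _ fun t htT => ?_
    by_cases h : t = t₀
    · subst h
      simp only [if_pos rfl, div_self (ne_of_gt ht₀pos), one_pow]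
      simpa using tendsto_const_nhds (x := d t)
    · simp only [if_neg h]
      have htpos : 0 < t := hpos _ (Finset.mem_filter.1 htT).1
      have hlt : t < t₀ := lt_of_le_of_ne (T.le_max' t htT) h
      have habs : |t / t₀| < 1 := by
        rw [abs_of_pos (div_pos htpos ht₀pos)]
        rw [div_lt_one ht₀pos]; exact hlt
      simpa using (tendsto_pow_atTop_nhds_zero_of_abs_lt_one habs).const_mul (d t)
  have hev : ∀ᶠ n in Filter.atTop, (∑ t ∈ T, d t * (t / t₀) ^ n) ≠ 0 :=
    hlim.eventually_ne hd₀
  obtain ⟨N, hN⟩ := Filter.eventually_atTop.1 hev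
  refine ⟨N, fun n hn => ?_⟩
  rw [hsum0]
  have : (∑ t ∈ T, d t * t ^ n) = (∑ t ∈ T, d t * (t / t₀) ^ n) * t₀ ^ n := by
    rw [Finset.sum_mul]
    refine Finset.sum_congr rfl fun t _ => ?_
    rw [div_pow, mul_assoc, div_mul_cancel₀]
    exact pow_ne_zero _ (ne_of_gt ht₀pos)
  rw [this]
  exact mul_ne_zero (hN n hn) (pow_ne_zero _ (ne_of_gt ht₀pos))

/-- Along a fixed parity, an exponential sum with nonzero bases that is nonzero at the
base point of that parity is eventually nonzero. -/
lemma expSum_parity (s : Finset ℝ) (c : ℝ → ℝ) (hr : ∀ r ∈ s, r ≠ 0) (σ : ℕ)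
    (hσ : (∑ r ∈ s, c r * r ^ σ) ≠ 0) :
    ∃ N : ℕ, ∀ n ≥ N, (∑ r ∈ s, c r * r ^ (2 * n + σ)) ≠ 0 := by
  classical
  set s' : Finset ℝ := s.image (fun r => r ^ 2) with hs'
  set d : ℝ → ℝ := fun t => ∑ r ∈ s.filter (fun r => r ^ 2 = t), c r * r ^ σ with hd
  have hfib : ∀ n : ℕ, (∑ t ∈ s', d t * t ^ n) = ∑ r ∈ s, c r * r ^ (2 * n + σ) := by
    intro n
    have : ∀ t ∈ s', d t * t ^ n
        = ∑ r ∈ s.filter (fun r => r ^ 2 = t), c r * r ^ (2 * n + σ) := by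
      intro t _
      rw [hd, Finset.sum_mul]
      refine Finset.sum_congr rfl fun r hrm => ?_
      have h2 : r ^ 2 = t := (Finset.mem_filter.1 hrm).2
      rw [← h2, ← pow_mul, mul_assoc, ← pow_add]
      ring_nf
    rw [Finset.sum_congr rfl this,
      Finset.sum_fiberwise_of_maps_to (fun r hrm => Finset.mem_image_of_mem _ hrm)]
  have hpos : ∀ t ∈ s', 0 < t := by
    intro t ht
    obtain ⟨r, hrs, rfl⟩ := Finset.mem_image.1 ht
    have := hr r hrs
    positivity
  have h0 : (∑ t ∈ s', d t) ≠ 0 := by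
    have := hfib 0
    simp only [mul_zero, zero_add, pow_zero, mul_one] at this
    rwa [this]
  obtain ⟨N, hN⟩ := posExp_eventually s' d hpos h0
  exact ⟨N, fun n hn => by rw [← hfib]; exact hN n hn⟩

/-- An exponential sum with nonzero bases that is nonzero at `0` and `1` is eventually
nonzero. -/
lemma IsExpSum.eventually_ne_zero {f : ℕ → ℝ} (hf : IsExpSum f)
    (h0 : f 0 ≠ 0) (h1 : f 1 ≠ 0) : ∃ K₀ : ℕ, ∀ K > K₀, f K ≠ 0 := by
  obtain ⟨s, c, hr, he⟩ := hf
  obtain ⟨N₀, hN₀⟩ := expSum_parity s c hr 0 (by rw [← he 0]; exact h0)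
  obtain ⟨N₁, hN₁⟩ := expSum_parity s c hr 1 (by rw [← he 1]; exact h1)
  refine ⟨2 * N₀ + 2 * N₁ + 2, fun K hK => ?_⟩
  rw [he]
  rcases Nat.even_or_odd K with ⟨n, hn⟩ | ⟨n, hn⟩
  · have hK' : K = 2 * n + 0 := by omega
    rw [hK']
    exact hN₀ n (by omega)
  · have hK' : K = 2 * n + 1 := by omega
    rw [hK']
    exact hN₁ n (by omega)

/-- Full column rank via the Gram determinant. -/
lemma rank_eq_iff_det_gram {m p : ℕ} (A : Matrix (Fin m ⊕ Fin m) (Fin p) ℝ) :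
    A.rank = p ↔ (Aᵀ * A).det ≠ 0 := by
  classical
  rw [← Matrix.rank_transpose_mul_self]
  constructor
  · intro h hdet
    -- rank = p means mulVecLin surjective, hence matrix is a unit, so det ≠ 0
    have hfin : Module.finrank ℝ (LinearMap.range (Aᵀ * A).mulVecLin) = p := h
    have hrange : LinearMap.range (Aᵀ * A).mulVecLin = ⊤ := by
      apply Submodule.eq_top_of_finrank_eq
      rw [hfin, Module.finrank_pi]
      simp
    have hsurj : Function.Surjective ((Aᵀ * A).mulVec) := by
      intro v
      obtain ⟨w, hw⟩ := (LinearMap.range_eq_top.1 hrange) v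
      exact ⟨w, hw⟩
    have := Matrix.mulVec_surjective_iff_isUnit.1 hsurj
    rw [Matrix.isUnit_iff_isUnit_det, isUnit_iff_ne_zero] at this
    exact this hdet
  · intro hdet
    have : IsUnit (Aᵀ * A) :=
      (Matrix.isUnit_iff_isUnit_det _).2 (isUnit_iff_ne_zero.2 hdet)
    rw [Matrix.rank_of_isUnit _ this, Fintype.card_fin]

/-- with `T_K` obtained from `B = [B₁; B₂]` by scaling the `j`-th column of
`B₁` by `z_j^K`, if `T_0` and `T_1` have full column rank `p`, then `T_K` has full column
rank for all sufficiently large `K`. -/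
theorem stmt_13 {m p : ℕ} (B₁ B₂ : Matrix (Fin m) (Fin p) ℝ)
    (z : Fin p → ℝ) (hz : ∀ j, z j ≠ 0)
    (T : ℕ → Matrix (Fin m ⊕ Fin m) (Fin p) ℝ)
    (hT : ∀ K, T K = Matrix.fromRows (Matrix.of fun i j => B₁ i j * z j ^ K) B₂)
    (hp : p ≤ 2 * m)
    (h0 : (T 0).rank = p) (h1 : (T 1).rank = p) :
    ∃ K₀ : ℕ, ∀ K > K₀, (T K).rank = p := by
  classical
  set g : ℕ → ℝ := fun K => ((T K)ᵀ * T K).det with hg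
  -- each Gram entry is an exponential sum
  have hentry : ∀ j j' : Fin p, IsExpSum (fun K => ((T K)ᵀ * T K) j j') := by
    intro j j'
    have : ∀ K, ((T K)ᵀ * T K) j j' = ∑ i : Fin m ⊕ Fin m, T K i j * T K i j' := by
      intro K
      simp [Matrix.mul_apply, Matrix.transpose_apply]
    have h' : IsExpSum (fun K => ∑ i : Fin m ⊕ Fin m, T K i j * T K i j') := by
      apply isExpSum_sum
      rintro (a | a) _
      · have heq : (fun K => T K (Sum.inl a) j * T K (Sum.inl a) j')
            = fun K => (B₁ a j * B₁ a j') * (z j * z j') ^ K := by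
          funext K
          rw [hT K]
          simp only [Matrix.fromRows_apply_inl, Matrix.of_apply, mul_pow]
          ring
        rw [heq]
        exact isExpSum_const_mul_pow _ _ (mul_ne_zero (hz j) (hz j'))
      · have heq : (fun K => T K (Sum.inr a) j * T K (Sum.inr a) j')
            = fun _ => B₂ a j * B₂ a j' := by
          funext K
          rw [hT K]
          simp [Matrix.fromRows_apply_inr]
        rw [heq]
        exact isExpSum_const _
    rw [funext this]
    exact h'
  -- the Gram determinant is an exponential sum
  have hgE : IsExpSum g := by
    have : ∀ K, g K = ∑ σ : Equiv.Perm (Fin p),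
        ((Equiv.Perm.sign σ : ℤ) : ℝ) * ∏ j : Fin p, ((T K)ᵀ * T K) (σ j) j := by
      intro K
      rw [hg]
      simp only [Matrix.det_apply]
      refine Finset.sum_congr rfl fun σ _ => ?_
      rw [Units.smul_def, zsmul_eq_mul]
    have h' : IsExpSum (fun K => ∑ σ : Equiv.Perm (Fin p),
        ((Equiv.Perm.sign σ : ℤ) : ℝ) * ∏ j : Fin p, ((T K)ᵀ * T K) (σ j) j) := by
      apply isExpSum_sum
      intro σ _
      exact (isExpSum_const _).mul (isExpSum_prod _ _ fun j _ => hentry (σ j) j)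
    rw [funext this]
    exact h'
  have hg0 : g 0 ≠ 0 := (rank_eq_iff_det_gram (T 0)).1 h0
  have hg1 : g 1 ≠ 0 := (rank_eq_iff_det_gram (T 1)).1 h1
  obtain ⟨K₀, hK₀⟩ := hgE.eventually_ne_zero hg0 hg1
  exact ⟨K₀, fun K hK => (rank_eq_iff_det_gram (T K)).2 (hK₀ K hK)⟩
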